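/- Let P be a path on n vertices and let ω be an r-shifted C-rainbow colouring of P (for some r ∈ {0,…,n−1}), where |C| = c ≥ 2. Then for any d ∈ C, m(P,ω,d) ≥ n − N_d(P,ω). -/

import Mathlib

open Classical SimpleGraph

/-- The spanning subgraph of `G` whose edges join vertices of equal colour under `ω`.
Its connected components are the monochromatic components of `(G, ω)`. -/
def monoSubgraph {V C : Type*} (G : SimpleGraph V) (ω : V → C) : SimpleGraph V where
  Adj u v := G.Adj u v ∧ ω u = ω v
  symm := ⟨fun u v h => ⟨h.1.symm, h.2.symm⟩⟩
  loopless := ⟨fun u h => G.loopless.irrefl u h.1⟩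

/-- A single flooding move `(v, d)`: every vertex in the monochromatic component of `v`
receives colour `d`. -/
noncomputable def floodMove {V C : Type*} (G : SimpleGraph V) (ω : V → C) (v : V) (d : C) :
    V → C :=
  fun u => if (monoSubgraph G ω).Reachable v u then d else ω u

/-- Apply a sequence of flooding moves, in order. -/
noncomputable def floodSeq {V C : Type*} (G : SimpleGraph V) :
    List (V × C) → (V → C) → (V → C)
  | [], ω => ω
  | m :: ms, ω => floodSeq G ms (floodMove G ω m.1 m.2)

/-- `m(G, ω, d)`: the minimum number of moves needed to give every vertex colour `d`,
starting from the colouring `ω`. -/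
noncomputable def floodCost {V C : Type*} (G : SimpleGraph V) (ω : V → C) (d : C) : ℕ :=
  sInf {k | ∃ ms : List (V × C), ms.length = k ∧ ∀ v, floodSeq G ms ω v = d}

/-- `m(G, ω)`: the minimum over target colours `d ∈ C` of `m(G, ω, d)`. -/
noncomputable def floodCostMin {V C : Type*} (G : SimpleGraph V) (ω : V → C) : ℕ :=
  sInf {k | ∃ d : C, floodCost G ω d = k}

/-- `M_c(G)`: the maximum of `m(G, ω)` over all surjective colourings
`ω : V(G) → {1, …, c}`. -/
noncomputable def maxFloodCost {V : Type*} (c : ℕ) (G : SimpleGraph V) : ℕ :=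
  sSup {k | ∃ ω : V → Fin c, Function.Surjective ω ∧ floodCostMin G ω = k}

/-- `ω` is an `r`-shifted `C`-rainbow colouring of the path `v₁ … vₙ` (here indexed by
`Fin n`, with `v_i` corresponding to index `i - 1`): there is a bijective indexing
`e : ZMod c → C` of the `c` colours (combining the indexing `d` of `C` with the
permutation `π`) such that `ω(v_i) = e((i - r) mod c)` for all `1 ≤ i ≤ n`.
A `C`-rainbow colouring is a `0`-shifted `C`-rainbow colouring. -/
def IsShiftedRainbow {C : Type*} (c r : ℕ) {n : ℕ} (ω : Fin n → C) : Prop :=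
  ∃ e : ZMod c → C, Function.Bijective e ∧
    ∀ i : Fin n, ω i = e ((((i : ℕ) + 1 : ℕ) : ZMod c) - ((r : ℕ) : ZMod c))

-- A: basics
lemma floodSeq_append {V C : Type*} (G : SimpleGraph V) (l₁ l₂ : List (V × C)) (ω : V → C) :
    floodSeq G (l₁ ++ l₂) ω = floodSeq G l₂ (floodSeq G l₁ ω) := by
  induction l₁ generalizing ω with
  | nil => rfl
  | cons m ms ih => simp [floodSeq, ih]

lemma mono_reach_colour {V C : Type*} {G : SimpleGraph V} {ω : V → C} {x y : V}
    (h : (monoSubgraph G ω).Reachable x y) : ω y = ω x := by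
  obtain ⟨w⟩ := h
  induction w with
  | nil => rfl
  | cons h w ih => rw [ih, h.2]

lemma reach_between {n : ℕ} {C : Type*} {ω : Fin n → C} {x y w : Fin n}
    (h : (monoSubgraph (pathGraph n) ω).Reachable x y) (h1 : x ≤ w) (h2 : w ≤ y) :
    (monoSubgraph (pathGraph n) ω).Reachable x w := by
  obtain ⟨W⟩ := h
  induction W with
  | nil => exact (le_antisymm h2 h1) ▸ Reachable.refl _
  | @cons a b y hadj W ih =>
    rcases eq_or_lt_of_le h1 with rfl | hlt
    · exact Reachable.refl _
    · have hb : b ≤ w := by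
        rcases (pathGraph_adj.mp hadj.1) with hh | hh
        · exact Fin.le_def.mpr (by omega)
        · exact Fin.le_def.mpr (by have := Fin.lt_def.mp hlt; omega)
      exact (SimpleGraph.Adj.reachable (G := monoSubgraph (pathGraph n) ω) hadj).trans (ih hb h2)

-- witness: flooding everything with colour d
lemma flood_all_d {V C : Type*} (G : SimpleGraph V) (d : C) :
    ∀ (l : List V) (ω : V → C) (v : V), (v ∈ l ∨ ω v = d) →
      floodSeq G (l.map (fun u => (u, d))) ω v = d := by
  intro l
  induction l with
  | nil =>
    intro ω v hv
    rcases hv with h | h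
    · exact absurd h List.not_mem_nil
    · exact h
  | cons a l ih =>
    intro ω v hv
    simp only [List.map_cons, floodSeq]
    apply ih
    have hpres : ω v = d → floodMove G ω a d v = d := by
      intro h; unfold floodMove; split <;> [rfl; exact h]
    rcases hv with h | h
    · rcases List.mem_cons.mp h with rfl | h
      · right
        show (if (monoSubgraph G ω).Reachable v v then d else ω v) = d
        rw [if_pos (Reachable.refl v)]
      · left; exact h
    · right; exact hpres h

-- uniqueness within a window
lemma window_unique {c z z' : ℕ} (hc : 0 < c) (h : z % c = z' % c) (h1 : z ≤ z')
    (h2 : z' < z + c) : z = z' := by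
  have hd : c ∣ z' - z := (Nat.modEq_iff_dvd' h1).mp h
  rcases Nat.eq_zero_or_pos (z' - z) with h0 | h0
  · omega
  · have := Nat.le_of_dvd h0 hd; omega

lemma window_one (c ρ a : ℕ) (hc : 0 < c) :
    ((Finset.Ico a (a + c)).filter (fun z => z % c = ρ % c)).card = 1 := by
  rw [Finset.card_eq_one]
  set X := ρ % c + c - a % c with hX
  have hXlt := Nat.mod_lt X hc
  have hsum : a + X = c * (a / c) + c + ρ % c := by
    have h1 := Nat.mod_add_div a c
    have h2 := Nat.mod_lt a hc
    have h3 := Nat.mod_lt ρ hc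
    omega
  have hmod : (a + X % c) % c = ρ % c := by
    rw [Nat.add_mod_mod, hsum]
    have : c * (a / c) + c + ρ % c = ρ % c + c + c * (a/c) := by ring
    rw [this, Nat.add_mul_mod_self_left, Nat.add_mod_right, Nat.mod_mod_of_dvd _ dvd_rfl]
  refine ⟨a + X % c, ?_⟩
  ext z
  simp only [Finset.mem_filter, Finset.mem_Ico, Finset.mem_singleton]
  constructor
  · rintro ⟨⟨hz1, hz2⟩, hz3⟩
    rcases le_total z (a + X % c) with hle | hle
    · exact window_unique hc (hz3.trans hmod.symm) hle (by omega)
    · exact (window_unique hc (hmod.trans hz3.symm) hle (by omega)).symm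
  · rintro rfl
    exact ⟨⟨Nat.le_add_right _ _, by omega⟩, hmod⟩

lemma window_card (c ρ : ℕ) (hc : 0 < c) (a m : ℕ) :
    ((Finset.Ico a (a + m * c)).filter (fun z => z % c = ρ % c)).card = m := by
  induction m generalizing a with
  | zero => simp
  | succ m ih =>
    have hsplit : Finset.Ico a (a + (m + 1) * c) =
        Finset.Ico a (a + c) ∪ Finset.Ico (a + c) (a + c + m * c) := by
      rw [Finset.Ico_union_Ico_eq_Ico (by omega) (by omega)]
      congr 1; ring
    have hdisj : Disjoint ((Finset.Ico a (a + c)).filter (fun z => z % c = ρ % c))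
        ((Finset.Ico (a + c) (a + c + m * c)).filter (fun z => z % c = ρ % c)) :=
      Finset.disjoint_filter_filter (Finset.Ico_disjoint_Ico_consecutive a (a+c) _)
    rw [hsplit, Finset.filter_union, Finset.card_union_of_disjoint hdisj,
      window_one c ρ a hc, ih (a + c)]
    omega

lemma window_card_Ioo (c ρ : ℕ) (hc : 0 < c) (a m : ℕ) (ha : a % c ≠ ρ % c) :
    ((Finset.Ioo a (a + m * c)).filter (fun z => z % c = ρ % c)).card = m := by
  rcases Nat.eq_zero_or_pos m with rfl | hm
  · simp
  · have hab : a < a + m * c := by have := Nat.mul_pos hm hc; omega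
    have : Finset.Ico a (a + m * c) = insert a (Finset.Ioo a (a + m * c)) := by
      rw [Finset.Ioo_insert_left hab]
    have hw := window_card c ρ hc a m
    rw [this, Finset.filter_insert, if_neg ha] at hw
    exact hw

section Dynamics
variable {C : Type*} {n : ℕ}

/-- colouring after `t` moves -/
noncomputable def colA (ω : Fin n → C) (ms : List (Fin n × C)) (t : ℕ) : Fin n → C :=
  floodSeq (pathGraph n) (ms.take t) ω

/-- `v` changes colour at some point -/
def chg (ω : Fin n → C) (ms : List (Fin n × C)) (v : Fin n) : Prop :=
  ∃ t, colA ω ms (t + 1) v ≠ ω v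

/-- first time `v`'s colour differs from its original colour -/
noncomputable def fcv (ω : Fin n → C) (ms : List (Fin n × C)) (v : Fin n) : ℕ :=
  sInf {t | colA ω ms (t + 1) v ≠ ω v}

variable (ω : Fin n → C) (ms : List (Fin n × C))

lemma colA_zero : colA ω ms 0 = ω := rfl

lemma colA_stab {t : ℕ} (ht : ms.length ≤ t) : colA ω ms t = floodSeq (pathGraph n) ms ω := by
  rw [colA, List.take_of_length_le ht]

lemma colA_step {t : ℕ} (ht : t < ms.length) (v : Fin n) :
    colA ω ms (t + 1) v =
      if (monoSubgraph (pathGraph n) (colA ω ms t)).Reachable (ms.get ⟨t, ht⟩).1 v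
      then (ms.get ⟨t, ht⟩).2 else colA ω ms t v := by
  have h1 : ms.take (t + 1) = ms.take t ++ [ms.get ⟨t, ht⟩] := by
    rw [List.take_succ]
    congr 1
    rw [List.getElem?_eq_getElem ht]
    rfl
  show floodSeq (pathGraph n) (ms.take (t+1)) ω v = _
  rw [h1, floodSeq_append]
  show floodMove (pathGraph n) (colA ω ms t) (ms.get ⟨t, ht⟩).1 (ms.get ⟨t, ht⟩).2 v = _
  unfold floodMove
  split <;> rfl

lemma fc_before (v : Fin n) {s : ℕ} (hs : s ≤ fcv ω ms v) : colA ω ms s v = ω v := by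
  cases s with
  | zero => rfl
  | succ t =>
    have ht : t < fcv ω ms v := hs
    have := Nat.notMem_of_lt_sInf ht
    simpa using this

lemma fc_spec (v : Fin n) (hv : chg ω ms v) : colA ω ms (fcv ω ms v + 1) v ≠ ω v :=
  Nat.sInf_mem hv

lemma chg_of_ne_d (d : C) (hfl : ∀ u, floodSeq (pathGraph n) ms ω u = d) (v : Fin n)
    (hv : ω v ≠ d) : chg ω ms v ∧ fcv ω ms v < ms.length := by
  have hchg : chg ω ms v := by
    refine ⟨ms.length, ?_⟩
    rw [colA_stab ω ms (by omega), hfl v]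
    exact fun h => hv h.symm
  refine ⟨hchg, ?_⟩
  by_contra hk
  push_neg at hk
  rcases Nat.eq_zero_or_pos ms.length with h0 | h0
  · have : colA ω ms 0 v = d := by rw [colA_stab ω ms (by omega), hfl v]
    exact hv this
  · have h1 : ms.length - 1 < fcv ω ms v := by omega
    have h2 := Nat.notMem_of_lt_sInf h1
    simp only [Set.mem_setOf_eq, not_not] at h2
    have h3 : ms.length - 1 + 1 = ms.length := by omega
    rw [h3, colA_stab ω ms (le_refl _), hfl v] at h2
    exact hv h2.symm

/-- CORE: if `u` and `u'` first change at the same time `τ`, any `w` between them has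
first change at most `τ`, with equality only if it has the same original colour. -/
lemma core_l2 {u w u' : Fin n} (h1 : u < w) (h2 : w < u')
    (hu : chg ω ms u) (hu' : chg ω ms u') (hfe : fcv ω ms u = fcv ω ms u') :
    chg ω ms w ∧ fcv ω ms w ≤ fcv ω ms u ∧ (fcv ω ms w = fcv ω ms u → ω w = ω u) := by
  set τ := fcv ω ms u with hτ
  have hmemu : colA ω ms (τ + 1) u ≠ ω u := fc_spec ω ms u hu
  have hbefu : colA ω ms τ u = ω u := fc_before ω ms u (le_refl _)
  have hmemu' : colA ω ms (τ + 1) u' ≠ ω u' := by rw [hfe]; exact fc_spec ω ms u' hu'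
  have hbefu' : colA ω ms τ u' = ω u' := by rw [hfe]; exact fc_before ω ms u' (le_refl _)
  have hchu : colA ω ms (τ + 1) u ≠ colA ω ms τ u := by rw [hbefu]; exact hmemu
  have hτlt : τ < ms.length := by
    by_contra hge
    push_neg at hge
    have e1 : colA ω ms (τ + 1) u = colA ω ms τ u := by
      rw [colA_stab ω ms (by omega), colA_stab ω ms hge]
    exact hchu e1
  set p := (ms.get ⟨τ, hτlt⟩).1 with hp
  set c' := (ms.get ⟨τ, hτlt⟩).2 with hc'
  have step := colA_step ω ms hτlt
  have hru : (monoSubgraph (pathGraph n) (colA ω ms τ)).Reachable p u := by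
    by_contra hr
    rw [step u, if_neg hr] at hchu
    exact hchu rfl
  have hcu : colA ω ms (τ + 1) u = c' := by rw [step u, if_pos hru]
  have hchu' : colA ω ms (τ + 1) u' ≠ colA ω ms τ u' := by rw [hbefu']; exact hmemu'
  have hru' : (monoSubgraph (pathGraph n) (colA ω ms τ)).Reachable p u' := by
    by_contra hr
    rw [step u', if_neg hr] at hchu'
    exact hchu' rfl
  have hruu' : (monoSubgraph (pathGraph n) (colA ω ms τ)).Reachable u u' := hru.symm.trans hru'
  have hrw : (monoSubgraph (pathGraph n) (colA ω ms τ)).Reachable u w :=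
    reach_between hruu' h1.le h2.le
  have hrpw : (monoSubgraph (pathGraph n) (colA ω ms τ)).Reachable p w := hru.trans hrw
  have hcolw : colA ω ms τ w = colA ω ms τ u := mono_reach_colour hrw
  have hstepw : colA ω ms (τ + 1) w = c' := by rw [step w, if_pos hrpw]
  have hcne : c' ≠ ω u := by rw [← hcu]; exact hmemu
  rcases eq_or_ne (colA ω ms τ w) (ω w) with hcase | hcase
  · have hww : ω w = ω u := by rw [← hcase, hcolw, hbefu]
    have hwit : colA ω ms (τ + 1) w ≠ ω w := by
      rw [hstepw, hww]; exact hcne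
    have hchgw : chg ω ms w := ⟨τ, hwit⟩
    exact ⟨hchgw, Nat.sInf_le hwit, fun _ => hww⟩
  · have hτpos : τ ≠ 0 := by
      intro h0
      rw [h0] at hcase
      exact hcase rfl
    obtain ⟨s, hs⟩ : ∃ s, τ = s + 1 := ⟨τ - 1, by omega⟩
    have hwit : colA ω ms (s + 1) w ≠ ω w := by rw [← hs]; exact hcase
    have hchgw : chg ω ms w := ⟨s, hwit⟩
    have hle : fcv ω ms w ≤ s := Nat.sInf_le hwit
    refine ⟨hchgw, by omega, fun heq => ?_⟩
    omega

lemma eqcol {u u' : Fin n} (hu : chg ω ms u) (hu' : chg ω ms u')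
    (hfe : fcv ω ms u = fcv ω ms u') : ω u = ω u' := by
  set τ := fcv ω ms u with hτ
  have hmemu : colA ω ms (τ + 1) u ≠ ω u := fc_spec ω ms u hu
  have hbefu : colA ω ms τ u = ω u := fc_before ω ms u (le_refl _)
  have hmemu' : colA ω ms (τ + 1) u' ≠ ω u' := by rw [hfe]; exact fc_spec ω ms u' hu'
  have hbefu' : colA ω ms τ u' = ω u' := by rw [hfe]; exact fc_before ω ms u' (le_refl _)
  have hchu : colA ω ms (τ + 1) u ≠ colA ω ms τ u := by rw [hbefu]; exact hmemu
  have hτlt : τ < ms.length := by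
    by_contra hge
    push_neg at hge
    exact hchu (by rw [colA_stab ω ms (by omega), colA_stab ω ms hge])
  set p := (ms.get ⟨τ, hτlt⟩).1 with hp
  have step := colA_step ω ms hτlt
  have hru : (monoSubgraph (pathGraph n) (colA ω ms τ)).Reachable p u := by
    by_contra hr
    rw [step u, if_neg hr] at hchu
    exact hchu rfl
  have hchu' : colA ω ms (τ + 1) u' ≠ colA ω ms τ u' := by rw [hbefu']; exact hmemu'
  have hru' : (monoSubgraph (pathGraph n) (colA ω ms τ)).Reachable p u' := by
    by_contra hr
    rw [step u', if_neg hr] at hchu'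
    exact hchu' rfl
  calc ω u = colA ω ms τ u := hbefu.symm
    _ = colA ω ms τ p := mono_reach_colour hru
    _ = colA ω ms τ u' := (mono_reach_colour hru').symm
    _ = ω u' := hbefu'

end Dynamics

section Gaps
variable {C : Type*} {n : ℕ} (ω : Fin n → C) (ms : List (Fin n × C))

/-- no member of the same first-change class strictly between `p` and `v` -/
def NoMem (p v : Fin n) : Prop :=
  ∀ x : Fin n, p < x → x < v → chg ω ms x → fcv ω ms x ≠ fcv ω ms v

/-- `(p, v)` is a gap of a class whose colour is not `d`: consecutive members of a class -/
def IsGap (d : C) (p v : Fin n) : Prop :=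
  p < v ∧ chg ω ms p ∧ chg ω ms v ∧ fcv ω ms p = fcv ω ms v ∧ NoMem ω ms p v ∧ ω v ≠ d

/-- L5: every member of the class of an early-changing vertex `z` inside a gap lies
strictly inside that gap. -/
lemma gap_span {p v z : Fin n} (hpv : p < v) (hchp : chg ω ms p) (hchv : chg ω ms v)
    (hfe : fcv ω ms p = fcv ω ms v) (hz1 : p < z) (hz2 : z < v) (hzc : chg ω ms z)
    (hzlt : fcv ω ms z < fcv ω ms v) :
    ∀ x : Fin n, chg ω ms x → fcv ω ms x = fcv ω ms z → p < x ∧ x < v := by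
  intro x hx hfx
  constructor
  · by_contra hle
    push_neg at hle
    rcases eq_or_lt_of_le hle with rfl | hlt
    · rw [hfx] at hfe; omega
    · have := (core_l2 ω ms hlt hz1 hx hzc (by rw [hfx])).2.1
      rw [hfx] at this
      omega
  · by_contra hle
    push_neg at hle
    rcases eq_or_lt_of_le hle with rfl | hlt
    · rw [hfx] at hfe; omega
    · have := (core_l2 ω ms hz2 hlt hzc hx (by rw [hfx])).2.1
      omega

/-- nesting: two overlapping gaps with `p₁ < p₂ < v₁` must nest: `v₂ < v₁`. -/
lemma gaps_nest {d : C} {p1 v1 p2 v2 : Fin n} (hg1 : IsGap ω ms d p1 v1)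
    (hg2 : IsGap ω ms d p2 v2) (h12 : p1 < p2) (hov : p2 < v1) : v2 < v1 := by
  obtain ⟨hpv1, hchp1, hchv1, hfe1, hnm1, -⟩ := hg1
  obtain ⟨hpv2, hchp2, hchv2, hfe2, hnm2, -⟩ := hg2
  have hτne : fcv ω ms v2 ≠ fcv ω ms v1 := by
    intro h
    exact hnm1 p2 h12 hov hchp2 (by rw [hfe2, h])
  have hcore := core_l2 ω ms h12 hov hchp1 hchv1 hfe1
  have hle : fcv ω ms p2 ≤ fcv ω ms v1 := hfe1 ▸ hcore.2.1
  have hτlt : fcv ω ms p2 < fcv ω ms v1 := by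
    rcases lt_or_eq_of_le hle with h | h
    · exact h
    · exact absurd h (hnm1 p2 h12 hov hchp2)
  rcases lt_trichotomy v1 v2 with h | h | h
  · exfalso
    have := (core_l2 ω ms hov h hchp2 hchv2 hfe2).2.1
    rw [hfe2] at hτlt
    omega
  · exact absurd (h ▸ rfl) hτne
  · exact h

/-- existence of a `d`-coloured representative in a gap avoiding all proper subgaps -/
lemma zeta_exists {d : C} (c ρ : ℕ) (hc : 2 ≤ c)
    (hcol : ∀ u v : Fin n, ω u = ω v ↔ u.val % c = v.val % c)
    (hdd : ∀ v : Fin n, ω v = d ↔ v.val % c = ρ % c)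
    {p v : Fin n} (hgap : IsGap ω ms d p v) :
    ∃ z : Fin n, p < z ∧ z < v ∧ ω z = d ∧
      ∀ p' v' : Fin n, IsGap ω ms d p' v' → p < p' → v' < v → ¬(p' < z ∧ z < v') := by
  classical
  have hc0 : 0 < c := by omega
  obtain ⟨hpv, hchp, hchv, hfe, hnm, hvd⟩ := hgap
  have hωpv : ω p = ω v := eqcol ω ms hchp hchv hfe
  have hpd : ω p ≠ d := by rw [hωpv]; exact hvd
  have hpρ : p.val % c ≠ ρ % c := fun h => hpd ((hdd p).mpr h)
  -- length of a gap: divisible by c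
  have gap_div : ∀ p' v' : Fin n, IsGap ω ms d p' v' →
      ∃ m', 1 ≤ m' ∧ v'.val - p'.val = m' * c ∧ p'.val % c ≠ ρ % c := by
    intro p' v' hg
    obtain ⟨hpv', hchp', hchv', hfe', hnm', hvd'⟩ := hg
    have hωpv' : ω p' = ω v' := eqcol ω ms hchp' hchv' hfe'
    have : p'.val % c = v'.val % c := (hcol p' v').mp hωpv'
    have hdvd : c ∣ v'.val - p'.val := (Nat.modEq_iff_dvd' (le_of_lt hpv')).mp this
    obtain ⟨m', hm'⟩ := hdvd
    have hpos : (0:ℕ) < v'.val - p'.val := by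
      have := Fin.lt_def.mp hpv'; omega
    have hm1' : 1 ≤ m' := by
      rcases Nat.eq_zero_or_pos m' with rfl | h
      · simp at hm'; omega
      · exact h
    exact ⟨m', hm1', by rw [hm', Nat.mul_comm],
      fun h => (by rw [hωpv']; exact hvd' : ω p' ≠ d) ((hdd p').mpr h)⟩
  obtain ⟨m, hm1, hm, -⟩ := gap_div p v ⟨hpv, hchp, hchv, hfe, hnm, hvd⟩
  -- main d-set
  set Dmain : Finset ℕ := (Finset.Ioo p.val v.val).filter (fun z => z % c = ρ % c) with hDmaindef
  have hveq : v.val = p.val + m * c := by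
    have := Fin.lt_def.mp hpv; omega
  have hDmain : Dmain.card = m := by
    rw [hDmaindef, hveq]
    exact window_card_Ioo c ρ hc0 p.val m hpρ
  -- subgaps strictly inside
  set F : Finset (Fin n × Fin n) :=
    Finset.univ.filter (fun q => IsGap ω ms d q.1 q.2 ∧ p < q.1 ∧ q.2 < v) with hFdef
  have hFmem : ∀ q : Fin n × Fin n, q ∈ F ↔ IsGap ω ms d q.1 q.2 ∧ p < q.1 ∧ q.2 < v := by
    intro q; simp [hFdef]
  set M : Finset (Fin n × Fin n) :=
    F.filter (fun q => ∀ q' ∈ F, q'.1 ≤ q.1 → q.2 ≤ q'.2 → q = q') with hMdef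
  have hMmem : ∀ q : Fin n × Fin n, q ∈ M ↔
      q ∈ F ∧ ∀ q' ∈ F, q'.1 ≤ q.1 → q.2 ≤ q'.2 → q = q' := by
    intro q; simp [hMdef]
  -- every subgap is inside a maximal one
  have hmaxof : ∀ q ∈ F, ∃ qm ∈ M, qm.1 ≤ q.1 ∧ q.2 ≤ qm.2 := by
    intro q hq
    set F' : Finset (Fin n × Fin n) := F.filter (fun q' => q'.1 ≤ q.1 ∧ q.2 ≤ q'.2) with hF'def
    have hqF' : q ∈ F' := by simp [hF'def, hq]
    obtain ⟨qm, hqmF', hqmax⟩ :=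
      F'.exists_max_image (fun q' => q'.2.val - q'.1.val) ⟨q, hqF'⟩
    have hqmF : qm ∈ F ∧ qm.1 ≤ q.1 ∧ q.2 ≤ qm.2 := by
      have := Finset.mem_filter.mp hqmF'; exact ⟨this.1, this.2⟩
    refine ⟨qm, (hMmem qm).mpr ⟨hqmF.1, ?_⟩, hqmF.2.1, hqmF.2.2⟩
    intro q'' hq'' h1 h2
    have hq''F' : q'' ∈ F' := by
      refine Finset.mem_filter.mpr ⟨hq'', le_trans h1 hqmF.2.1, le_trans hqmF.2.2 h2⟩
    have hle1 := hqmax q'' hq''F'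
    have hg1 := ((hFmem qm).mp hqmF.1).1.1
    have hg2 := ((hFmem q'').mp hq'').1.1
    have e1 : qm.1 = q''.1 ∧ qm.2 = q''.2 := by
      have a1 := Fin.le_def.mp h1
      have a2 := Fin.le_def.mp h2
      have a3 := Fin.lt_def.mp hg1
      have a4 := Fin.lt_def.mp hg2
      constructor <;> [exact Fin.ext (by omega); exact Fin.ext (by omega)]
    exact Prod.ext e1.1 e1.2
  -- ordering of maximal subgaps
  have hord : ∀ q1 ∈ M, ∀ q2 ∈ M, q1 ≠ q2 → q1.2.val ≤ q2.1.val ∨ q2.2.val ≤ q1.1.val := by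
    intro q1 hq1 q2 hq2 hne
    by_contra hcon
    push_neg at hcon
    obtain ⟨hc1, hc2⟩ := hcon
    obtain ⟨hq1F, hq1max⟩ := (hMmem q1).mp hq1
    obtain ⟨hq2F, hq2max⟩ := (hMmem q2).mp hq2
    obtain ⟨hg1, -, -⟩ := (hFmem q1).mp hq1F
    obtain ⟨hg2, -, -⟩ := (hFmem q2).mp hq2F
    rcases lt_trichotomy q1.1 q2.1 with h | h | h
    · have hnest := gaps_nest ω ms hg1 hg2 h (Fin.lt_def.mpr hc1)
      exact hne (hq2max q1 hq1F (le_of_lt h) (le_of_lt hnest)).symm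
    · -- same left endpoint
      have hfeq : fcv ω ms q1.2 = fcv ω ms q2.2 := by
        rw [← hg1.2.2.2.1, ← hg2.2.2.2.1, h]
      rcases lt_trichotomy q1.2 q2.2 with h2 | h2 | h2
      · exact hg2.2.2.2.2.1 q1.2 (h ▸ hg1.1) h2 hg1.2.2.1 hfeq
      · exact hne (Prod.ext h h2)
      · exact hg1.2.2.2.2.1 q2.2 (h ▸ hg2.1) h2 hg2.2.2.1 hfeq.symm
    · have hnest := gaps_nest ω ms hg2 hg1 h (Fin.lt_def.mpr hc2)
      exact hne (hq1max q2 hq2F (le_of_lt h) (le_of_lt hnest))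
  -- the d-sets of the maximal subgaps
  set DQ : (Fin n × Fin n) → Finset ℕ :=
    fun q => (Finset.Ioo q.1.val q.2.val).filter (fun z => z % c = ρ % c) with hDQdef
  have hDQcard : ∀ q ∈ M, (DQ q).card * c = q.2.val - q.1.val := by
    intro q hq
    obtain ⟨hgF, -⟩ := (hMmem q).mp hq
    obtain ⟨hg, -, -⟩ := (hFmem q).mp hgF
    obtain ⟨mq, hmq1, hmq, hq1ρ⟩ := gap_div q.1 q.2 hg
    have hveq' : q.2.val = q.1.val + mq * c := by
      have := Fin.lt_def.mp hg.1; omega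
    have hcard : (DQ q).card = mq := by
      rw [hDQdef]
      simp only []
      rw [hveq']
      exact window_card_Ioo c ρ hc0 q.1.val mq hq1ρ
    rw [hcard]; omega
  have hIcoSub : ∀ q ∈ M, Finset.Ico q.1.val q.2.val ⊆ Finset.Ico (p.val+1) v.val := by
    intro q hq
    obtain ⟨hgF, -⟩ := (hMmem q).mp hq
    obtain ⟨-, hq1, hq2⟩ := (hFmem q).mp hgF
    intro z hz
    rw [Finset.mem_Ico] at hz ⊢
    have a1 := Fin.lt_def.mp hq1
    have a2 := Fin.lt_def.mp hq2
    omega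
  have hIcoDisj : ∀ q1 ∈ M, ∀ q2 ∈ M, q1 ≠ q2 →
      Disjoint (Finset.Ico q1.1.val q1.2.val) (Finset.Ico q2.1.val q2.2.val) := by
    intro q1 hq1 q2 hq2 hne
    rw [Finset.disjoint_left]
    intro z hz1 hz2
    rw [Finset.mem_Ico] at hz1 hz2
    rcases hord q1 hq1 q2 hq2 hne with h | h <;> omega
  have hsum : ∑ q ∈ M, (q.2.val - q.1.val) ≤ v.val - p.val - 1 := by
    have h1 : ∑ q ∈ M, (q.2.val - q.1.val) =
        (M.biUnion (fun q => Finset.Ico q.1.val q.2.val)).card := by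
      rw [Finset.card_biUnion hIcoDisj]
      exact Finset.sum_congr rfl (fun q _ => (Nat.card_Ico _ _).symm)
    have h2 : (M.biUnion (fun q => Finset.Ico q.1.val q.2.val)).card ≤
        (Finset.Ico (p.val+1) v.val).card :=
      Finset.card_le_card (Finset.biUnion_subset.mpr hIcoSub)
    rw [Nat.card_Ico] at h2
    omega
  have hDQdisj : ∀ q1 ∈ M, ∀ q2 ∈ M, q1 ≠ q2 → Disjoint (DQ q1) (DQ q2) := by
    intro q1 hq1 q2 hq2 hne
    rw [Finset.disjoint_left]
    intro z hz1 hz2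
    rw [hDQdef] at hz1 hz2
    simp only [Finset.mem_filter, Finset.mem_Ioo] at hz1 hz2
    rcases hord q1 hq1 q2 hq2 hne with h | h <;> omega
  have hTsub : M.biUnion DQ ⊆ Dmain := by
    intro z hz
    rw [Finset.mem_biUnion] at hz
    obtain ⟨q, hq, hzq⟩ := hz
    obtain ⟨hgF, -⟩ := (hMmem q).mp hq
    obtain ⟨-, hq1, hq2⟩ := (hFmem q).mp hgF
    rw [hDQdef] at hzq
    simp only [Finset.mem_filter, Finset.mem_Ioo] at hzq
    rw [hDmaindef]
    simp only [Finset.mem_filter, Finset.mem_Ioo]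
    have a1 := Fin.lt_def.mp hq1
    have a2 := Fin.lt_def.mp hq2
    exact ⟨⟨by omega, by omega⟩, hzq.2⟩
  have hTcard : (M.biUnion DQ).card < m := by
    have h1 : (M.biUnion DQ).card ≤ ∑ q ∈ M, (DQ q).card := Finset.card_biUnion_le
    have h2 : (∑ q ∈ M, (DQ q).card) * c ≤ m * c - 1 := by
      rw [Finset.sum_mul]
      have e1 : ∑ q ∈ M, (DQ q).card * c = ∑ q ∈ M, (q.2.val - q.1.val) :=
        Finset.sum_congr rfl hDQcard
      rw [e1]
      omega
    have hmc : 1 ≤ m * c := Nat.one_le_iff_ne_zero.mpr (by positivity)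
    by_contra hh
    push_neg at hh
    have h3 : m * c ≤ (∑ q ∈ M, (DQ q).card) * c := Nat.mul_le_mul_right c (by omega)
    omega
  have hzx : ∃ z ∈ Dmain, z ∉ M.biUnion DQ := by
    by_contra hh
    push_neg at hh
    have hsub : Dmain ⊆ M.biUnion DQ := hh
    have := Finset.card_le_card hsub
    omega
  obtain ⟨z, hzD, hzT⟩ := hzx
  have hzmem : (p.val < z ∧ z < v.val) ∧ z % c = ρ % c := by
    rw [hDmaindef] at hzD
    simpa using hzD
  have hzn : z < n := lt_trans hzmem.1.2 v.isLt
  refine ⟨⟨z, hzn⟩, Fin.lt_def.mpr hzmem.1.1, Fin.lt_def.mpr hzmem.1.2,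
    (hdd ⟨z, hzn⟩).mpr hzmem.2, ?_⟩
  intro p' v' hg' hpp' hv'v hins
  have hq' : (p', v') ∈ F := (hFmem (p', v')).mpr ⟨hg', hpp', hv'v⟩
  obtain ⟨qm, hqmM, hin1, hin2⟩ := hmaxof _ hq'
  have hzDQ : z ∈ DQ qm := by
    rw [hDQdef]
    simp only [Finset.mem_filter, Finset.mem_Ioo]
    have a1 : qm.1.val ≤ p'.val := Fin.le_def.mp hin1
    have a2 : v'.val ≤ qm.2.val := Fin.le_def.mp hin2
    have a3 : p'.val < z := Fin.lt_def.mp hins.1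
    have a4 : z < v'.val := Fin.lt_def.mp hins.2
    exact ⟨⟨by omega, by omega⟩, hzmem.2⟩
  exact hzT (Finset.mem_biUnion.mpr ⟨qm, hqmM, hzDQ⟩)

end Gaps

section MainBound
variable {C : Type*} {n : ℕ}

lemma main_bound {c : ℕ} (hc : 2 ≤ c) (ω : Fin n → C) (d : C) (ρ : ℕ)
    (hcol : ∀ u v : Fin n, ω u = ω v ↔ u.val % c = v.val % c)
    (hdd : ∀ v : Fin n, ω v = d ↔ v.val % c = ρ % c)
    (ms : List (Fin n × C)) (hfl : ∀ u, floodSeq (pathGraph n) ms ω u = d) :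
    (Finset.univ.filter (fun i : Fin n => ω i ≠ d)).card ≤ ms.length := by
  classical
  set S := Finset.univ.filter (fun i : Fin n => ω i ≠ d) with hSdef
  have hSne : ∀ v ∈ S, ω v ≠ d := by intro v hv; simpa [hSdef] using hv
  set Lm : Fin n → Prop :=
    fun v => ∀ x : Fin n, x < v → chg ω ms x → fcv ω ms x ≠ fcv ω ms v with hLmdef
  have hex : ∀ v : Fin n, ω v ≠ d → ¬ Lm v → ∃ z : Fin n,
      chg ω ms z ∧ fcv ω ms z < fcv ω ms v ∧ ω z = d ∧
      ∃ p : Fin n, IsGap ω ms d p v ∧ p < z ∧ z < v ∧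
        (∀ p' v' : Fin n, IsGap ω ms d p' v' → p < p' → v' < v → ¬(p' < z ∧ z < v')) := by
    intro v hvd hnl
    have hvchg : chg ω ms v := (chg_of_ne_d ω ms d hfl v hvd).1
    simp only [hLmdef] at hnl
    push_neg at hnl
    obtain ⟨x₀, hx1, hx2, hx3⟩ := hnl
    set W : Finset (Fin n) :=
      Finset.univ.filter (fun x => x < v ∧ chg ω ms x ∧ fcv ω ms x = fcv ω ms v) with hWdef
    have hWne : W.Nonempty := ⟨x₀, by simp [hWdef, hx1, hx2, hx3]⟩
    set p := W.max' hWne with hpdef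
    have hpW : p ∈ W := W.max'_mem _
    rw [hWdef, Finset.mem_filter] at hpW
    obtain ⟨-, hp1, hp2, hp3⟩ := hpW
    have hnomem : NoMem ω ms p v := by
      intro x h1 h2 h3 h4
      have hxW : x ∈ W := by
        rw [hWdef, Finset.mem_filter]
        exact ⟨Finset.mem_univ _, h2, h3, h4⟩
      exact absurd (W.le_max' x hxW) (not_le.mpr h1)
    have hgap : IsGap ω ms d p v := ⟨hp1, hp2, hvchg, hp3, hnomem, hvd⟩
    obtain ⟨z, hz1, hz2, hz3, havoid⟩ := zeta_exists ω ms c ρ hc hcol hdd hgap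
    have hcore := core_l2 ω ms hz1 hz2 hp2 hvchg hp3
    have hzchg : chg ω ms z := hcore.1
    have hzlt : fcv ω ms z < fcv ω ms v := by
      rcases lt_or_eq_of_le (hp3 ▸ hcore.2.1) with h | h
      · exact h
      · exfalso
        have hzz : fcv ω ms z = fcv ω ms p := by omega
        have : ω z = ω p := hcore.2.2 hzz
        have hpv : ω p = ω v := eqcol ω ms hp2 hvchg hp3
        rw [hz3, hpv] at this
        exact hvd this.symm
    exact ⟨z, hzchg, hzlt, hz3, p, hgap, hz1, hz2, havoid⟩
  set Θ : Fin n → ℕ := fun v =>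
    if h : ω v ≠ d ∧ ¬ Lm v then fcv ω ms (Classical.choose (hex v h.1 h.2))
    else fcv ω ms v with hΘdef
  have hmaps : ∀ v ∈ S, Θ v ∈ Finset.range ms.length := by
    intro v hv
    have hvd := hSne v hv
    have hvlt := (chg_of_ne_d ω ms d hfl v hvd).2
    rw [Finset.mem_range]
    simp only [hΘdef]
    by_cases h : ω v ≠ d ∧ ¬ Lm v
    · rw [dif_pos h]
      have hspec := Classical.choose_spec (hex v h.1 h.2)
      omega
    · rw [dif_neg h]
      exact hvlt
  have hinj : Set.InjOn Θ ↑S := by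
    intro v hv v' hv' heq
    have hvS : v ∈ S := hv
    have hv'S : v' ∈ S := hv'
    have hvd := hSne v hvS
    have hv'd := hSne v' hv'S
    have hvchg : chg ω ms v := (chg_of_ne_d ω ms d hfl v hvd).1
    have hv'chg : chg ω ms v' := (chg_of_ne_d ω ms d hfl v' hv'd).1
    by_cases h1 : Lm v <;> by_cases h2 : Lm v'
    · -- both leftmost
      have e1 : Θ v = fcv ω ms v := by simp only [hΘdef]; exact dif_neg (fun hh => hh.2 h1)
      have e2 : Θ v' = fcv ω ms v' := by simp only [hΘdef]; exact dif_neg (fun hh => hh.2 h2)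
      rw [e1, e2] at heq
      rcases lt_trichotomy v v' with h | h | h
      · exact absurd heq (h2 v h hvchg)
      · exact h
      · exact absurd heq.symm (h1 v' h hv'chg)
    · -- v leftmost, v' not
      exfalso
      have e1 : Θ v = fcv ω ms v := by simp only [hΘdef]; exact dif_neg (fun hh => hh.2 h1)
      have e2 : Θ v' = fcv ω ms (Classical.choose (hex v' hv'd h2)) := by
        simp only [hΘdef]; exact dif_pos (⟨hv'd, h2⟩ : ω v' ≠ d ∧ ¬ Lm v')
      obtain ⟨hz'chg, hz'lt, hz'd, -⟩ := Classical.choose_spec (hex v' hv'd h2)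
      rw [e1, e2] at heq
      have : ω v = ω (Classical.choose (hex v' hv'd h2)) := eqcol ω ms hvchg hz'chg heq
      rw [hz'd] at this
      exact hvd this
    · -- v' leftmost, v not
      exfalso
      have e1 : Θ v = fcv ω ms (Classical.choose (hex v hvd h1)) := by
        simp only [hΘdef]; exact dif_pos (⟨hvd, h1⟩ : ω v ≠ d ∧ ¬ Lm v)
      have e2 : Θ v' = fcv ω ms v' := by simp only [hΘdef]; exact dif_neg (fun hh => hh.2 h2)
      obtain ⟨hzchg, hzlt, hzd, -⟩ := Classical.choose_spec (hex v hvd h1)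
      rw [e1, e2] at heq
      have : ω v' = ω (Classical.choose (hex v hvd h1)) := eqcol ω ms hv'chg hzchg heq.symm
      rw [hzd] at this
      exact hv'd this
    · -- both not leftmost
      by_contra hne
      set z := Classical.choose (hex v hvd h1) with hzdef
      set z' := Classical.choose (hex v' hv'd h2) with hz'def
      have e1 : Θ v = fcv ω ms z := by
        simp only [hΘdef]; exact dif_pos (⟨hvd, h1⟩ : ω v ≠ d ∧ ¬ Lm v)
      have e2 : Θ v' = fcv ω ms z' := by
        simp only [hΘdef]; exact dif_pos (⟨hv'd, h2⟩ : ω v' ≠ d ∧ ¬ Lm v')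
      obtain ⟨hzchg, hzlt, hzd, p, hgap, hpz, hzv, havoid⟩ :=
        Classical.choose_spec (hex v hvd h1)
      obtain ⟨hz'chg, hz'lt, hz'd, p', hgap', hp'z', hz'v', havoid'⟩ :=
        Classical.choose_spec (hex v' hv'd h2)
      rw [e1, e2] at heq
      obtain ⟨hpv, hchp, hchv, hfe, hnm, -⟩ := hgap
      obtain ⟨hp'v', hchp', hchv', hfe', hnm', -⟩ := hgap'
      -- z' lies strictly inside the gap (p, v)
      have hz'in : p < z' ∧ z' < v :=
        gap_span ω ms hpv hchp hchv hfe hpz hzv hzchg hzlt z' hz'chg heq.symm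
      -- z lies strictly inside the gap (p', v')
      have hzin : p' < z ∧ z < v' :=
        gap_span ω ms hp'v' hchp' hchv' hfe' hp'z' hz'v' hz'chg hz'lt z hzchg heq
      rcases lt_trichotomy p p' with hpp | hpp | hpp
      · -- p < p' : gap' nests strictly inside gap
        have hp'v : p' < v := lt_trans hzin.1 hzv
        have hnest : v' < v :=
          gaps_nest ω ms ⟨hpv, hchp, hchv, hfe, hnm, hvd⟩
            ⟨hp'v', hchp', hchv', hfe', hnm', hv'd⟩ hpp hp'v
        exact havoid p' v' ⟨hp'v', hchp', hchv', hfe', hnm', hv'd⟩ hpp hnest hzin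
      · -- same pred
        have hfvv : fcv ω ms v = fcv ω ms v' := by rw [← hfe, ← hfe', hpp]
        rcases lt_trichotomy v v' with h | h | h
        · exact hnm' v (hpp ▸ hpv) h hchv hfvv
        · exact hne h
        · exact hnm v' (hpp ▸ hp'v') h hchv' hfvv.symm
      · -- p' < p : gap nests strictly inside gap'
        have hpv' : p < v' := lt_trans hz'in.1 hz'v'
        have hnest : v < v' :=
          gaps_nest ω ms ⟨hp'v', hchp', hchv', hfe', hnm', hv'd⟩
            ⟨hpv, hchp, hchv, hfe, hnm, hvd⟩ hpp hpv'
        exact havoid' p v ⟨hpv, hchp, hchv, hfe, hnm, hvd⟩ hpp hnest hz'in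
  calc S.card ≤ (Finset.range ms.length).card :=
        Finset.card_le_card_of_injOn Θ hmaps hinj
    _ = ms.length := by simp

end MainBound


/-- If `ω` is an `r`-shifted `C`-rainbow colouring of the path `P` on `n` vertices, where
`|C| = c ≥ 2` and `r ∈ {0, …, n-1}`, then for any `d ∈ C`,
`m(P, ω, d) ≥ n - N_d(P, ω)`. -/
theorem shiftedRainbow_floodCost_ge {C : Type*} (n c r : ℕ) (hc : 2 ≤ c) (hr : r < n)
    (ω : Fin n → C) (h : IsShiftedRainbow c r ω) (d : C) :
    n - {i : Fin n | ω i = d}.ncard ≤ floodCost (SimpleGraph.pathGraph n) ω d := by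
  classical
  haveI : NeZero c := ⟨by omega⟩
  obtain ⟨e, ⟨einj, esurj⟩, hω⟩ := h
  obtain ⟨k₀, hk₀⟩ := esurj d
  set ρZ : ZMod c := k₀ + (r : ZMod c) - 1 with hρZ
  set ρ : ℕ := ρZ.val with hρ
  have hcast : ((ρ : ℕ) : ZMod c) = ρZ := ZMod.natCast_rightInverse ρZ
  have hcol : ∀ u v : Fin n, ω u = ω v ↔ u.val % c = v.val % c := by
    intro u v
    rw [hω u, hω v, einj.eq_iff, sub_left_inj, ZMod.natCast_eq_natCast_iff']
    constructor
    · intro hh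
      have : (u.val + 1) % c = (v.val + 1) % c := hh
      exact Nat.ModEq.add_right_cancel' 1 this
    · intro hh
      exact Nat.ModEq.add_right 1 hh
  have hdd : ∀ v : Fin n, ω v = d ↔ v.val % c = ρ % c := by
    intro v
    rw [hω v, ← hk₀, einj.eq_iff, sub_eq_iff_eq_add]
    have e1 : ((v.val + 1 : ℕ) : ZMod c) = ((v.val : ℕ) : ZMod c) + 1 := by push_cast; ring
    have e2 : k₀ + (r : ZMod c) = ρZ + 1 := by rw [hρZ]; ring
    rw [e1, e2, add_left_inj, ← hcast, ZMod.natCast_eq_natCast_iff']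
  apply le_csInf
  · refine ⟨n, (List.finRange n).map (fun v => (v, d)), by simp, ?_⟩
    intro v
    exact flood_all_d (pathGraph n) d (List.finRange n) ω v (Or.inl (List.mem_finRange v))
  · rintro b ⟨ms, hlen, hfl⟩
    have hmb := main_bound hc ω d ρ hcol hdd ms hfl
    have hset : {i : Fin n | ω i = d} = ↑(Finset.univ.filter (fun i => ω i = d)) := by
      ext i; simp
    rw [hset, Set.ncard_coe_finset]
    have hsplit := Finset.card_filter_add_card_filter_not
      (s := (Finset.univ : Finset (Fin n))) (p := fun i => ω i = d)
    rw [Finset.card_univ, Fintype.card_fin] at hsplit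
    have hneg : (Finset.univ.filter (fun i : Fin n => ¬ (ω i = d))).card =
        (Finset.univ.filter (fun i : Fin n => ω i ≠ d)).card := rfl
    omega
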